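/- Let G be a Lie algebra over ℂ and R : G → G a linear operator satisfying [R(x),R(y)] = R([R(x),y] + [x,R(y)]) for all x,y. Then the product x*y = [R(x),y] defines a left-symmetric algebra on G. -/
import Mathlib


theorem stmt_19 (G : Type*) [LieRing G] [LieAlgebra ℂ G]
    (R : G →ₗ[ℂ] G)
    (hR : ∀ x y : G, ⁅R x, R y⁆ = R (⁅R x, y⁆ + ⁅x, R y⁆))
    (mul : G → G → G) (hmul : ∀ x y, mul x y = ⁅R x, y⁆) :
    ∀ x y z : G,
      mul (mul x y) z - mul x (mul y z) = mul (mul y x) z - mul y (mul x z) := by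
  intro x y z
  simp only [hmul]
  have h1 : ⁅R x, R y⁆ = R ⁅R x, y⁆ - R ⁅R y, x⁆ := by
    rw [hR x y, map_add, ← lie_skew (R y) x, map_neg]; abel
  have key : ⁅R ⁅R x, y⁆, z⁆ - ⁅R ⁅R y, x⁆, z⁆ = ⁅⁅R x, R y⁆, z⁆ := by
    rw [← sub_lie, ← h1]
  have jac : ⁅R x, ⁅R y, z⁆⁆ - ⁅R y, ⁅R x, z⁆⁆ = ⁅⁅R x, R y⁆, z⁆ := by
    rw [lie_lie]
  rw [sub_eq_sub_iff_sub_eq_sub, key, jac]
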